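/- Let M be a square n×n complex matrix with ind(M) = 1 and rank r. Let U be an n×r matrix whose columns are an orthonormal basis of ker(M)^⊥. Then the pseudo-determinant of M (the product of its nonzero eigenvalues, counted with algebraic multiplicity) equals det(Uᴴ M U), and Uᴴ M U is invertible. -/

import Mathlib

open Matrix
open scoped Classical

open Polynomial Module in
lemma my_charpoly_conj {m : Type*} [Fintype m] [DecidableEq m] (P M : Matrix m m ℂ)
    (h1 : Pᴴ * P = 1) (h2 : P * Pᴴ = 1) : (Pᴴ * M * P).charpoly = M.charpoly := by
  have hPP : (Pᴴ.map C) * (P.map C) = 1 := by rw [← Matrix.map_mul, h1]; simp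
  have hPP' : (P.map C) * (Pᴴ.map C) = 1 := by rw [← Matrix.map_mul, h2]; simp
  unfold Matrix.charpoly
  have key : charmatrix (Pᴴ * M * P) = (Pᴴ.map C) * charmatrix M * (P.map C) := by
    rw [charmatrix, charmatrix, Matrix.mul_sub, Matrix.sub_mul]
    congr 1
    · rw [← (Matrix.scalar_commute X (fun r => Commute.all _ r) (Pᴴ.map C)).eq,
        Matrix.mul_assoc, hPP, Matrix.mul_one]
    · simp [Matrix.map_mul, Matrix.mul_assoc]
  rw [key, Matrix.det_mul, Matrix.det_mul, mul_comm, ← mul_assoc, ← Matrix.det_mul, hPP']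
  simp

lemma my_toEuclideanLin_mul {a b c : ℕ} (A : Matrix (Fin a) (Fin b) ℂ)
    (B : Matrix (Fin b) (Fin c) ℂ) :
    Matrix.toEuclideanLin (A * B) = Matrix.toEuclideanLin A ∘ₗ Matrix.toEuclideanLin B := by
  rw [Matrix.toEuclideanLin_eq_toLin, Matrix.toEuclideanLin_eq_toLin,
    Matrix.toEuclideanLin_eq_toLin]
  exact Matrix.toLin_mul _ _ _ A B

open Module in
lemma my_rank_eq_finrank {n : ℕ} (M : Matrix (Fin n) (Fin n) ℂ) :
    M.rank = finrank ℂ (LinearMap.range (Matrix.toEuclideanLin M)) := by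
  rw [Matrix.toEuclideanLin_eq_toLin]
  exact M.rank_eq_finrank_range_toLin _ _

open Module in
lemma my_finrank_ker {n : ℕ} (M : Matrix (Fin n) (Fin n) ℂ) :
    finrank ℂ (LinearMap.ker (Matrix.toEuclideanLin M)) = n - M.rank := by
  have h := LinearMap.finrank_range_add_finrank_ker (Matrix.toEuclideanLin M)
  rw [finrank_euclideanSpace, Fintype.card_fin] at h
  have h2 := my_rank_eq_finrank M
  omega

open Polynomial Module in
lemma my_charpoly_factor {n r : ℕ} (hrn : r ≤ n)
    (M : Matrix (Fin n) (Fin n) ℂ)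
    (U : Matrix (Fin n) (Fin r) ℂ) (hU : Uᴴ * U = 1)
    (W : Matrix (Fin n) (Fin (n - r)) ℂ) (hWW : Wᴴ * W = 1)
    (hMW : M * W = 0) (hUW : Uᴴ * W = 0) :
    M.charpoly = (Uᴴ * M * U).charpoly * Polynomial.X ^ (n - r) := by
  have hadd : r + (n - r) = n := Nat.add_sub_cancel' hrn
  let e : Fin r ⊕ Fin (n - r) ≃ Fin n := finSumFinEquiv.trans (finCongr hadd)
  set V : Matrix (Fin n) (Fin r ⊕ Fin (n - r)) ℂ := fromCols U W with hV
  have hVc : Vᴴ = fromRows Uᴴ Wᴴ := conjTranspose_fromCols_eq_fromRows_conjTranspose U W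
  have hWU : Wᴴ * U = 0 := by
    have := congrArg conjTranspose hUW
    simpa using this
  have hVV : Vᴴ * V = 1 := by
    rw [hVc, hV, fromRows_mul_fromCols, hU, hUW, hWU, hWW, ← Matrix.fromBlocks_one]
  have hVV' : V * Vᴴ = 1 := by
    rw [hVc] at hVV ⊢
    rw [hV] at hVV ⊢
    exact (fromCols_mul_fromRows_eq_one_comm e.symm U W Uᴴ Wᴴ).mpr hVV
  have hB : Vᴴ * M * V = fromBlocks (Uᴴ * M * U) 0 (Wᴴ * M * U) 0 := by
    rw [hVc, hV, fromRows_mul, Matrix.fromRows_mul_fromCols]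
    simp only [Matrix.mul_assoc, hMW, Matrix.mul_zero]
  set P : Matrix (Fin r ⊕ Fin (n - r)) (Fin r ⊕ Fin (n - r)) ℂ := V.submatrix ⇑e id with hP
  have hPc : Pᴴ = Vᴴ.submatrix id ⇑e := by rw [hP, Matrix.conjTranspose_submatrix]
  have h1 : Pᴴ * P = 1 := by
    rw [hPc, hP]
    have := Matrix.submatrix_mul_equiv Vᴴ V (id : Fin r ⊕ Fin (n-r) → Fin r ⊕ Fin (n-r)) e
      (id : Fin r ⊕ Fin (n-r) → Fin r ⊕ Fin (n-r))
    rw [this, hVV, Matrix.submatrix_id_id]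
  have h2 : P * Pᴴ = 1 := by
    rw [hPc, hP]
    have := Matrix.submatrix_mul_equiv V Vᴴ ⇑e (Equiv.refl (Fin r ⊕ Fin (n - r))) ⇑e
    simp only [Equiv.coe_refl] at this
    rw [this, hVV']
    exact Matrix.submatrix_one_equiv e
  have hconj : (Pᴴ * (M.submatrix ⇑e ⇑e) * P).charpoly = M.charpoly := by
    rw [my_charpoly_conj P _ h1 h2]
    have : M.submatrix ⇑e ⇑e = (Matrix.reindex e.symm e.symm) M := by
      rw [Matrix.reindex_apply]; simp
    rw [this, Matrix.charpoly_reindex]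
  have hPMP : Pᴴ * (M.submatrix ⇑e ⇑e) * P = Vᴴ * M * V := by
    rw [hPc, hP]
    have s1 := Matrix.submatrix_mul_equiv Vᴴ M
      (id : Fin r ⊕ Fin (n-r) → Fin r ⊕ Fin (n-r)) e ⇑e
    rw [s1]
    have s2 := Matrix.submatrix_mul_equiv (Vᴴ * M) V
      (id : Fin r ⊕ Fin (n-r) → Fin r ⊕ Fin (n-r)) e (id : Fin r ⊕ Fin (n-r) → Fin r ⊕ Fin (n-r))
    rw [s2, Matrix.submatrix_id_id]
  rw [← hconj, hPMP, hB, Matrix.charpoly_fromBlocks_zero₁₂]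
  congr 1
  simp [Matrix.charpoly, charmatrix, Matrix.det_diagonal]

/-- The pseudo-determinant: the product of the nonzero eigenvalues of `M`
(roots of the characteristic polynomial over `ℂ`, with algebraic multiplicity);
the empty product is `1`. -/
noncomputable def pdet {n : ℕ} (M : Matrix (Fin n) (Fin n) ℂ) : ℂ :=
  (M.charpoly.roots.filter (fun z => z ≠ 0)).prod

/-- If `ind M = 1`, `r = rank M`, and `U` is an orthonormal basis matrix
of `(ker M)ᗮ`, then `Uᴴ M U` is invertible and `pdet M = det (Uᴴ M U)`. -/
theorem stmt16 {n r : ℕ}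
    (M : Matrix (Fin n) (Fin n) ℂ)
    (hind : (M * M).rank = M.rank) (hr : r = M.rank)
    (U : Matrix (Fin n) (Fin r) ℂ) (hU : Uᴴ * U = 1)
    (hUrange : LinearMap.range (Matrix.toEuclideanLin U) =
      (LinearMap.ker (Matrix.toEuclideanLin M))ᗮ) :
    IsUnit (Uᴴ * M * U).det ∧ pdet M = (Uᴴ * M * U).det := by
  set K := LinearMap.ker (Matrix.toEuclideanLin M) with hK
  have hrn : r ≤ n := hr ▸ M.rank_le_width
  have hdim : Module.finrank ℂ K = n - r := by rw [← hK] at *; rw [my_finrank_ker, hr]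
  -- kernel of M² equals kernel of M
  have hker2 : LinearMap.ker (Matrix.toEuclideanLin (M * M)) = K := by
    refine (Submodule.eq_of_le_of_finrank_le ?_ ?_).symm
    · intro x hx
      rw [LinearMap.mem_ker] at hx ⊢
      rw [my_toEuclideanLin_mul, LinearMap.comp_apply, hx, map_zero]
    · rw [my_finrank_ker, hind, hdim, hr]
  -- invertibility of Uᴴ M U
  have hunit : IsUnit (Uᴴ * M * U).det := by
    rw [isUnit_iff_ne_zero]
    intro hdet
    obtain ⟨v, hv0, hv⟩ := (Matrix.exists_mulVec_eq_zero_iff).mpr hdet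
    set vE : EuclideanSpace ℂ (Fin r) := (WithLp.equiv 2 (Fin r → ℂ)).symm v with hvE
    set xE : EuclideanSpace ℂ (Fin n) := Matrix.toEuclideanLin U vE with hxE
    set yE : EuclideanSpace ℂ (Fin n) := Matrix.toEuclideanLin M xE with hyE
    have hUHy : Matrix.toEuclideanLin Uᴴ yE = 0 := by
      rw [hyE, hxE, hvE]
      have : Matrix.toEuclideanLin Uᴴ (Matrix.toEuclideanLin M (Matrix.toEuclideanLin U
          ((WithLp.equiv 2 (Fin r → ℂ)).symm v)))
          = Matrix.toEuclideanLin (Uᴴ * M * U) ((WithLp.equiv 2 (Fin r → ℂ)).symm v) := by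
        rw [my_toEuclideanLin_mul, my_toEuclideanLin_mul]; rfl
      rw [this, WithLp.equiv_symm_apply, Matrix.toEuclideanLin_apply_piLp_toLp, hv]
      simp
    have hymem : yE ∈ K := by
      rw [← Submodule.orthogonal_orthogonal K, ← hUrange]
      rw [Submodule.mem_orthogonal]
      rintro w ⟨z, rfl⟩
      rw [← LinearMap.adjoint_inner_right (Matrix.toEuclideanLin U) z yE,
        ← Matrix.toEuclideanLin_conjTranspose_eq_adjoint, hUHy, inner_zero_right]
    have hxker : xE ∈ K := by
      rw [← hker2, LinearMap.mem_ker, my_toEuclideanLin_mul]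
      exact hymem
    have hxperp : xE ∈ Kᗮ := by
      rw [← hUrange]; exact ⟨vE, rfl⟩
    have hx0 : xE = 0 :=
      (Submodule.disjoint_def.mp (Submodule.orthogonal_disjoint K)) xE hxker hxperp
    have hv0' : vE = 0 := by
      have h1 : Matrix.toEuclideanLin Uᴴ xE = 0 := by rw [hx0]; simp
      rw [hxE] at h1
      have h2 : Matrix.toEuclideanLin (Uᴴ * U) vE = 0 := by
        rw [my_toEuclideanLin_mul]; exact h1
      rw [hU] at h2
      rw [hvE, WithLp.equiv_symm_apply, Matrix.toEuclideanLin_apply_piLp_toLp, Matrix.one_mulVec] at h2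
      exact h2
    exact hv0 (by simpa [hvE] using congrArg (WithLp.equiv 2 (Fin r → ℂ)) hv0')
  -- construction of W
  let b : OrthonormalBasis (Fin (n - r)) ℂ K :=
    (stdOrthonormalBasis ℂ K).reindex (finCongr hdim)
  let W : Matrix (Fin n) (Fin (n - r)) ℂ :=
    Matrix.of fun i j => (b j : EuclideanSpace ℂ (Fin n)) i
  have hWW : Wᴴ * W = 1 := by
    ext j k
    have horth := b.orthonormal
    rw [orthonormal_iff_ite] at horth
    have h2 := horth j k
    rw [Submodule.coe_inner, PiLp.inner_apply] at h2
    simp only [RCLike.inner_apply] at h2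
    simp only [Matrix.mul_apply, Matrix.conjTranspose_apply, Matrix.one_apply, W, Matrix.of_apply]
    rw [← h2]
    exact Finset.sum_congr rfl fun _ _ => mul_comm _ _
  have hMW : M * W = 0 := by
    ext i k
    have hk : Matrix.toEuclideanLin M (b k : EuclideanSpace ℂ (Fin n)) = 0 :=
      (LinearMap.mem_ker).mp (b k).2
    rw [Matrix.toEuclideanLin_apply] at hk
    have hz : M *ᵥ (WithLp.equiv 2 (Fin n → ℂ)) ((b k : EuclideanSpace ℂ (Fin n))) = 0 := by
      have := congrArg (WithLp.equiv 2 (Fin n → ℂ)) hk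
      simpa using this
    have := congrFun hz i
    simpa [Matrix.mul_apply, Matrix.mulVec, dotProduct, W] using this
  have hUW : Uᴴ * W = 0 := by
    ext j k
    have hmem : (WithLp.equiv 2 (Fin n → ℂ)).symm (fun i => U i j) ∈
        LinearMap.range (Matrix.toEuclideanLin U) := by
      refine ⟨(WithLp.equiv 2 (Fin r → ℂ)).symm (Pi.single j 1), ?_⟩
      rw [WithLp.equiv_symm_apply, Matrix.toEuclideanLin_apply_piLp_toLp]
      congr 1
      ext i
      simp [Matrix.mulVec_single]
    rw [hUrange, Submodule.mem_orthogonal'] at hmem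
    have h0 := hmem _ (b k).2
    rw [PiLp.inner_apply] at h0
    simp only [RCLike.inner_apply, WithLp.equiv_symm_apply, PiLp.toLp_apply] at h0
    simpa [Matrix.mul_apply, Matrix.conjTranspose_apply, W, mul_comm] using h0
  -- charpoly factorization
  have hch : M.charpoly = (Uᴴ * M * U).charpoly * Polynomial.X ^ (n - r) :=
    my_charpoly_factor hrn M U hU W hWW hMW hUW
  refine ⟨hunit, ?_⟩
  -- final computation
  unfold pdet
  rw [hch, Polynomial.roots_mul (mul_ne_zero (Matrix.charpoly_monic _).ne_zero
    (Polynomial.monic_X_pow _).ne_zero), Polynomial.roots_pow, Polynomial.roots_X, Multiset.filter_add]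
  have h1 : (Uᴴ * M * U).charpoly.roots.filter (fun z => z ≠ 0)
      = (Uᴴ * M * U).charpoly.roots := by
    refine Multiset.filter_eq_self.mpr fun z hz => ?_
    intro hz0
    have hroot : (Uᴴ * M * U).charpoly.IsRoot z := Polynomial.isRoot_of_mem_roots hz
    rw [hz0] at hroot
    have hc0 : (Uᴴ * M * U).charpoly.coeff 0 = 0 := by
      rw [Polynomial.coeff_zero_eq_eval_zero]; exact hroot
    have hdet := Matrix.det_eq_sign_charpoly_coeff (Uᴴ * M * U)
    rw [hc0, mul_zero] at hdet
    exact (isUnit_iff_ne_zero.mp hunit) hdet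
  have h2 : ((n - r) • ({0} : Multiset ℂ)).filter (fun z => z ≠ 0) = 0 := by
    simp [Multiset.nsmul_singleton, Multiset.filter_eq_nil]
    exact fun a h => Multiset.eq_of_mem_replicate h
  rw [h1, h2, add_zero, ← Matrix.det_eq_prod_roots_charpoly]
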